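/- The family {π_z}_{z∈𝔻} is a holomorphic family of representations: for every g ∈ G and every pair of vectors ξ, ξ′ ∈ ℓ²(X), the function z ↦ ⟨π_z(g)ξ, ξ′⟩ is holomorphic (complex differentiable) on the open unit disk 𝔻. -/

import Mathlib

noncomputable section

open scoped ComplexConjugate

/-- `ℓ²(X)`: the Hilbert space of square-summable complex functions on `X`. -/
abbrev ell2 (X : Type) : Type := lp (fun _ : X => ℂ) 2

/-- The Dirac function `δ_v` at a vertex `v`. -/
noncomputable def delta {X : Type} [DecidableEq X] (v : X) : ell2 X :=
  lp.single 2 v (1 : ℂ)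

/-- `w = √(1 − z²)`, using the principal branch of the square root, which is
holomorphic off the negative real axis and positive on the positive reals. -/
noncomputable def W (z : ℂ) : ℂ := (1 - z ^ 2) ^ ((1 : ℂ) / 2)

/-- The defining property of the edge operator `c_z(x,y)` for adjacent vertices
`x, y`: it sends `δ_x ↦ wδ_x − zδ_y`, `δ_y ↦ wδ_y + zδ_x`, and fixes `δ_v` for
every other vertex `v`. -/
def IsEdgeOp {X : Type} [DecidableEq X] (z : ℂ) (x y : X)
    (A : ell2 X →L[ℂ] ell2 X) : Prop :=
  A (delta x) = W z • delta x - z • delta y ∧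
  A (delta y) = W z • delta y + z • delta x ∧
  ∀ v : X, v ≠ x → v ≠ y → A (delta v) = delta v

/-- The product `f(v₀,v₁) * f(v₁,v₂) * ⋯ * f(v_{n−1},v_n)` along a walk
`v₀, v₁, …, v_n`. -/
def walkProd {X : Type} {T : SimpleGraph X} {E : Type} [Monoid E]
    (f : X → X → E) : {a b : X} → T.Walk a b → E
  | _, _, SimpleGraph.Walk.nil => 1
  | _, _, SimpleGraph.Walk.cons (u := u) (v := v) _ p => f u v * walkProd f p


section Aux

open ContinuousLinearMap Metric

variable {X : Type} [DecidableEq X]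

lemma ell2_clm_ext {A B : ell2 X →L[ℂ] ell2 X}
    (h : ∀ v : X, A (delta v) = B (delta v)) : A = B := by
  refine ContinuousLinearMap.ext fun f => ?_
  have hs := lp.hasSum_single (E := fun _ : X => ℂ) (p := 2) (by norm_num) f
  have hkey : ∀ v : X, lp.single 2 v (f v) = f v • delta v := by
    intro v
    rw [delta, ← lp.single_smul, smul_eq_mul, mul_one]
  have hA := hs.mapL A
  have hB := hs.mapL B
  refine hA.unique ?_
  have : (fun v : X => A (lp.single 2 v (f v))) = fun v : X => B (lp.single 2 v (f v)) := by
    funext v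
    rw [hkey, map_smul, map_smul, h v]
  rwa [this]

lemma inner_delta (v w : X) : (inner ℂ (delta v) (delta w) : ℂ) = if v = w then 1 else 0 := by
  rw [delta, delta, lp.inner_single_left]
  rcases eq_or_ne v w with rfl | h
  · simp [lp.single_apply_self]
  · simp [lp.single_apply_ne (E := fun _ : X => ℂ) 2 w (1:ℂ) h, h]

/-- rank-one operator `ξ ↦ ⟨δ_v, ξ⟩ δ_u`. -/
noncomputable def rk (u v : X) : ell2 X →L[ℂ] ell2 X :=
  (innerSL ℂ (delta v)).smulRight (delta u)

lemma rk_delta (u v w : X) : rk u v (delta w) = if v = w then delta u else 0 := by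
  simp only [rk, smulRight_apply, innerSL_apply_apply, inner_delta]
  split_ifs <;> simp

/-- explicit formula for the edge operator. -/
noncomputable def Bop (z : ℂ) (u v : X) : ell2 X →L[ℂ] ell2 X :=
  ContinuousLinearMap.id ℂ (ell2 X) + (W z - 1) • (rk u u + rk v v) + z • (rk u v - rk v u)

lemma isEdgeOp_Bop (z : ℂ) {u v : X} (huv : u ≠ v) : IsEdgeOp z u v (Bop z u v) := by
  refine ⟨?_, ?_, ?_⟩
  · simp only [Bop, add_apply, smul_apply, id_apply, sub_apply, rk_delta,
      if_pos rfl, if_neg huv, if_neg (Ne.symm huv), ↓reduceIte]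
    rw [sub_smul, one_smul]
    simp only [sub_zero, zero_sub, smul_neg, smul_zero, add_zero]
    abel
  · simp only [Bop, add_apply, smul_apply, id_apply, sub_apply, rk_delta,
      if_pos rfl, if_neg huv, if_neg (Ne.symm huv), ↓reduceIte]
    rw [sub_smul, one_smul]
    simp only [sub_zero, zero_sub, smul_zero, zero_add, add_zero]
    abel
  · intro w hwu hwv
    simp only [Bop, add_apply, smul_apply, id_apply, sub_apply, rk_delta,
      if_neg (Ne.symm hwu), if_neg (Ne.symm hwv)]
    simp

lemma edgeOp_unique {z : ℂ} {u v : X} {A B : ell2 X →L[ℂ] ell2 X}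
    (hA : IsEdgeOp z u v A) (hB : IsEdgeOp z u v B) : A = B := by
  refine ell2_clm_ext fun w => ?_
  rcases eq_or_ne w u with rfl | hwu
  · rw [hA.1, hB.1]
  rcases eq_or_ne w v with rfl | hwv
  · rw [hA.2.1, hB.2.1]
  · rw [hA.2.2 w hwu hwv, hB.2.2 w hwu hwv]

lemma differentiableOn_W : DifferentiableOn ℂ W (ball (0 : ℂ) 1) := by
  intro z hz
  have hslit : (1 - z ^ 2) ∈ Complex.slitPlane := by
    rw [Complex.mem_slitPlane_iff]
    left
    have h1 : |(z ^ 2).re| ≤ ‖z ^ 2‖ := Complex.abs_re_le_norm _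
    have h2 : ‖z ^ 2‖ < 1 := by
      rw [norm_pow]
      have := mem_ball_zero_iff.mp hz
      calc ‖z‖ ^ 2 ≤ ‖z‖ * 1 := by
            rw [sq]; gcongr
        _ < 1 := by simpa using this
    simp only [Complex.sub_re, Complex.one_re]
    have := abs_le.mp h1
    linarith
  have hdd : HasDerivAt (fun z : ℂ => 1 - z ^ 2) (-(2 * z ^ 1)) z :=
    ((hasDerivAt_pow 2 z).const_sub 1).congr_deriv (by push_cast; ring)
  exact ((hdd.cpow_const hslit).differentiableAt).differentiableWithinAt

lemma differentiableOn_Bop (u v : X) :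
    DifferentiableOn ℂ (fun z => Bop z u v) (ball (0 : ℂ) 1) := by
  unfold Bop
  apply DifferentiableOn.add
  apply DifferentiableOn.add
  · exact differentiableOn_const _
  · exact (differentiableOn_W.sub (differentiableOn_const 1)).smul
      (differentiableOn_const _)
  · exact (differentiableOn_id (𝕜 := ℂ) (E := ℂ)).smul (differentiableOn_const _)

lemma walkProd_Bop_diff {T : SimpleGraph X} {u v : X} (p : T.Walk u v) :
    DifferentiableOn ℂ (fun z => walkProd (fun a b => Bop z a b) p)
      (ball (0 : ℂ) 1) := by
  induction p with
  | nil =>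
    simp only [walkProd]
    exact differentiableOn_const 1
  | cons h p ih =>
    simp only [walkProd]
    exact (differentiableOn_Bop _ _).mul ih

lemma walkProd_congr_Bop {T : SimpleGraph X}
    (c : ℂ → X → X → (ell2 X →L[ℂ] ell2 X)) {z : ℂ} (hz : z ∈ ball (0 : ℂ) 1)
    (hedge : ∀ z ∈ ball (0 : ℂ) 1, ∀ u v : X, T.Adj u v → IsEdgeOp z u v (c z u v))
    {u v : X} (p : T.Walk u v) :
    walkProd (c z) p = walkProd (fun a b => Bop z a b) p := by
  induction p with
  | nil => rfl
  | cons h p ih =>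
    simp only [walkProd]
    rw [ih, edgeOp_unique (hedge z hz _ _ h) (isEdgeOp_Bop z h.ne)]

end Aux

/-- The family `{π_z}_{z∈𝔻}` is a holomorphic family of representations:
for every `g ∈ G` and every pair of vectors `ξ, ξ′ ∈ ℓ²(X)`, the matrix coefficient
`z ↦ ⟨π_z(g)ξ, ξ′⟩` is holomorphic on the open unit disk `𝔻`. -/
theorem pi_z_holomorphic_family {X : Type} [DecidableEq X] (T : SimpleGraph X)
    (hconn : T.Connected) (hacyc : T.IsAcyclic)
    (c : ℂ → X → X → (ell2 X →L[ℂ] ell2 X))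
    (hedge : ∀ z ∈ Metric.ball (0 : ℂ) 1, ∀ u v : X, T.Adj u v →
      IsEdgeOp z u v (c z u v))
    (hgeo : ∀ z ∈ Metric.ball (0 : ℂ) 1, ∀ u v : X, ∀ p : T.Walk u v,
      p.length = T.dist u v → c z u v = walkProd (c z) p)
    {G : Type} [Group G] [MulAction G X]
    (hact : ∀ (g : G) (u v : X), T.Adj u v ↔ T.Adj (g • u) (g • v))
    (U : G → (ell2 X →L[ℂ] ell2 X))
    (hU : ∀ (g : G) (v : X), U g (delta v) = delta (g • v))
    (x₀ : X) :
    ∀ g : G, ∀ ξ ξ' : ell2 X,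
      DifferentiableOn ℂ
        (fun z : ℂ => (inner ℂ ξ' ((c z x₀ (g • x₀) * U g) ξ) : ℂ))
        (Metric.ball (0 : ℂ) 1) := by
  intro g ξ ξ'
  obtain ⟨p, hp⟩ := hconn.exists_walk_length_eq_dist x₀ (g • x₀)
  have hd : DifferentiableOn ℂ
      (fun z => (walkProd (fun a b => Bop z a b) p) (U g ξ)) (Metric.ball (0 : ℂ) 1) :=
    (walkProd_Bop_diff p).clm_apply (differentiableOn_const _)
  have hd2 : DifferentiableOn ℂ
      (fun z => (inner ℂ ξ' ((walkProd (fun a b => Bop z a b) p) (U g ξ)) : ℂ))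
      (Metric.ball (0 : ℂ) 1) :=
    (innerSL ℂ ξ').differentiable.comp_differentiableOn hd
  refine hd2.congr fun z hz => ?_
  rw [ContinuousLinearMap.mul_apply, hgeo z hz _ _ p hp,
    walkProd_congr_Bop c hz hedge]
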